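/- arXiv:2411.02721 — 5 statements merged into one kernel-verified Lean document; each statement's English description precedes it below -/
import Mathlib

section
/- The parametric radial probability function e is jointly measurable: the map (c, v, x) ↦ e_c(x, v) from 𝒞 × S^{m−1} × ℝ^n to [0, ∞] is measurable with respect to the product of the Borel σ-algebras on 𝒞, S^{m−1} and ℝ^n. -/
open MeasureTheory Real Set
open scoped RealInnerProductSpace ENNReal

noncomputable section

/-- The density of the chi distribution with `m` degrees of freedom. -/
def chiPDF (m : ℕ) (r : ℝ) : ℝ :=
  (2 ^ (1 - (m : ℝ) / 2) / Real.Gamma ((m : ℝ) / 2)) * r ^ (m - 1) * Real.exp (-r ^ 2 / 2)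

/-- Matrix applied to a Euclidean vector. -/
def mApp {m : ℕ} (A : Matrix (Fin m) (Fin m) ℝ) (v : EuclideanSpace ℝ (Fin m)) :
    EuclideanSpace ℝ (Fin m) :=
  Matrix.toEuclideanLin A v

/-- The set `{r ≥ 0 : g(x, r·𝔏(c)v + 𝔷(c)) ≤ 0}`. -/
def radialSet {n m p : ℕ} (g : EuclideanSpace ℝ (Fin n) → EuclideanSpace ℝ (Fin m) → ℝ)
    (z : EuclideanSpace ℝ (Fin p) → EuclideanSpace ℝ (Fin m))
    (L : EuclideanSpace ℝ (Fin p) → Matrix (Fin m) (Fin m) ℝ)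
    (c : EuclideanSpace ℝ (Fin p)) (x : EuclideanSpace ℝ (Fin n))
    (v : EuclideanSpace ℝ (Fin m)) : Set ℝ :=
  {r : ℝ | 0 ≤ r ∧ g x (r • mApp (L c) v + z c) ≤ 0}

/-- The parametric radial probability function `e_c(x, v)`. -/
def radialE {n m p : ℕ} (g : EuclideanSpace ℝ (Fin n) → EuclideanSpace ℝ (Fin m) → ℝ)
    (z : EuclideanSpace ℝ (Fin p) → EuclideanSpace ℝ (Fin m))
    (L : EuclideanSpace ℝ (Fin p) → Matrix (Fin m) (Fin m) ℝ)
    (c : EuclideanSpace ℝ (Fin p)) (x : EuclideanSpace ℝ (Fin n))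
    (v : EuclideanSpace ℝ (Fin m)) : ℝ :=
  ∫ r in radialSet g z L c x v, chiPDF m r

/-- the parametric radial probability function `e` is jointly
(Borel) measurable in `(c, v, x) ∈ 𝒞 × S^{m-1} × ℝ^n`. -/
theorem radialE_measurable
    {n m p : ℕ} (hn : 0 < n) (hm : 0 < m) (hp : 0 < p)
    (𝒞 : Set (EuclideanSpace ℝ (Fin p))) (h𝒞 : MeasurableSet 𝒞)
    (z : EuclideanSpace ℝ (Fin p) → EuclideanSpace ℝ (Fin m))
    (L : EuclideanSpace ℝ (Fin p) → Matrix (Fin m) (Fin m) ℝ)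
    (hz : Measurable fun c : 𝒞 => z c)
    (hL : ∀ i j, Measurable fun c : 𝒞 => L c i j)
    (g : EuclideanSpace ℝ (Fin n) → EuclideanSpace ℝ (Fin m) → ℝ)
    (hg : Continuous (Function.uncurry g)) :
    Measurable fun q : 𝒞 × Metric.sphere (0 : EuclideanSpace ℝ (Fin m)) 1 ×
        EuclideanSpace ℝ (Fin n) =>
      radialE g z L (↑q.1) q.2.2 (↑q.2.1) := by
  set Q := 𝒞 × Metric.sphere (0 : EuclideanSpace ℝ (Fin m)) 1 × EuclideanSpace ℝ (Fin n)
    with hQ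
  -- the inner vector w(q,r) = r • 𝔏(c)v + 𝔷(c)
  set w : Q × ℝ → EuclideanSpace ℝ (Fin m) := fun qr =>
    qr.2 • mApp (L (qr.1.1 : EuclideanSpace ℝ (Fin p))) (qr.1.2.1 : EuclideanSpace ℝ (Fin m))
      + z qr.1.1 with hw_def
  have hv : Measurable fun qr : Q × ℝ => (qr.1.2.1 : EuclideanSpace ℝ (Fin m)) :=
    (continuous_subtype_val.comp
      (continuous_fst.comp (continuous_snd.comp continuous_fst))).measurable
  have hw : Measurable w := by
    have : Measurable fun qr : Q × ℝ =>
        (MeasurableEquiv.toLp 2 (Fin m → ℝ)).symm (w qr) := by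
      apply measurable_pi_lambda
      intro i
      have hcoord : ∀ qr : Q × ℝ,
          (MeasurableEquiv.toLp 2 (Fin m → ℝ)).symm (w qr) i =
            qr.2 * (∑ j, L (qr.1.1 : EuclideanSpace ℝ (Fin p)) i j *
              (MeasurableEquiv.toLp 2 (Fin m → ℝ)).symm (qr.1.2.1 : EuclideanSpace ℝ (Fin m)) j)
              + (MeasurableEquiv.toLp 2 (Fin m → ℝ)).symm (z qr.1.1) i := by
        intro qr
        simp only [hw_def, MeasurableEquiv.coe_toLp_symm]
        rfl
      simp only [hcoord]
      apply Measurable.add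
      · apply measurable_snd.mul
        apply Finset.measurable_sum
        intro j _
        exact (((hL i j).comp (measurable_fst.comp measurable_fst)).mul
          (((measurable_pi_apply j).comp
            ((MeasurableEquiv.toLp 2 (Fin m → ℝ)).symm.measurable.comp hv))))
      · exact (measurable_pi_apply i).comp
          ((MeasurableEquiv.toLp 2 (Fin m → ℝ)).symm.measurable.comp
            (hz.comp (measurable_fst.comp measurable_fst)))
    have := (MeasurableEquiv.toLp 2 (Fin m → ℝ)).symm.symm.measurable.comp this
    exact this
  -- the measurable set A ⊆ Q × ℝ
  set A : Set (Q × ℝ) := {qr | 0 ≤ qr.2 ∧ g qr.1.2.2 (w qr) ≤ 0} with hA_def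
  have hgm : Measurable fun qr : Q × ℝ => g qr.1.2.2 (w qr) := by
    have hx : Measurable fun qr : Q × ℝ => qr.1.2.2 :=
      measurable_snd.comp (measurable_snd.comp measurable_fst)
    exact hg.measurable.comp (hx.prodMk hw)
  have hA : MeasurableSet A := by
    apply MeasurableSet.inter
    · exact measurable_snd measurableSet_Ici
    · exact hgm measurableSet_Iic
  -- rewrite radialE as an integral of an indicator on the product
  have key : ∀ q : Q, radialE g z L (↑q.1) q.2.2 (↑q.2.1) =
      ∫ r, A.indicator (fun qr : Q × ℝ => chiPDF m qr.2) (q, r) := by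
    intro q
    have hS : MeasurableSet (radialSet g z L (↑q.1) q.2.2 (↑q.2.1)) := by
      have h := measurable_prodMk_left (x := q) hA
      exact h
    have heq : ∀ r : ℝ, (radialSet g z L (↑q.1) q.2.2 (↑q.2.1)).indicator (chiPDF m) r =
        A.indicator (fun qr : Q × ℝ => chiPDF m qr.2) (q, r) := by
      intro r
      by_cases hr : r ∈ radialSet g z L (↑q.1) q.2.2 (↑q.2.1)
      · rw [Set.indicator_of_mem hr, Set.indicator_of_mem]
        exact hr
      · rw [Set.indicator_of_notMem hr, Set.indicator_of_notMem]
        exact hr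
    rw [radialE, ← integral_indicator hS]
    exact integral_congr_ae (Filter.Eventually.of_forall heq)
  simp only [key]
  have hf : StronglyMeasurable (A.indicator fun qr : Q × ℝ => chiPDF m qr.2) := by
    apply Measurable.stronglyMeasurable
    apply Measurable.indicator _ hA
    have hchi : Continuous (chiPDF m) := by
      unfold chiPDF
      fun_prop
    exact hchi.measurable.comp measurable_snd
  exact hf.integral_prod_right'.measurable

end
end

section
/- If x̄ is a 𝔷-uniform Slater point, then for every fixed (c, v) ∈ 𝒞 × S^{m−1} the function x ↦ e_c(x, v) is continuous at x̄; that is, for every sequence x_k → x̄ one has e_c(x_k, v) → e_c(x̄, v). -/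
open MeasureTheory Real Set
open scoped RealInnerProductSpace ENNReal

noncomputable section

lemma aux_convA {f : ℝ → ℝ} (hf : ConvexOn ℝ Set.univ f) {r R : ℝ} (h0 : 0 ≤ r)
    (hrR : r ≤ R) (hR : 0 < R) :
    f r ≤ (1 - r / R) * f 0 + (r / R) * f R := by
  have h1 : r / R ≤ 1 := (div_le_one hR).2 hrR
  have h := hf.2 (Set.mem_univ (0:ℝ)) (Set.mem_univ R)
    (show (0:ℝ) ≤ 1 - r / R by linarith) (div_nonneg h0 hR.le)
    (show 1 - r / R + r / R = 1 by ring)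
  simpa [smul_eq_mul, div_mul_cancel₀ _ hR.ne'] using h

lemma aux_convB {f : ℝ → ℝ} (hf : ConvexOn ℝ Set.univ f) {b r : ℝ} (h0 : f 0 < 0)
    (hb : 0 < b) (hbr : b ≤ r) (hfb : 0 < f b) : 0 < f r := by
  rcases eq_or_lt_of_le hbr with h | h
  · rwa [← h]
  · have hr : 0 < r := hb.trans h
    have key := aux_convA hf hb.le h.le hr
    have h1 : 0 < b / r := div_pos hb hr
    have h2 : b / r ≤ 1 := (div_le_one hr).2 h.le
    nlinarith

lemma chiPDF_cont (m : ℕ) : Continuous (chiPDF m) := by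
  unfold chiPDF
  exact (continuous_const.mul (continuous_pow _)).mul
    (((continuous_pow 2).neg.div_const 2).rexp)

lemma chiPDF_nonneg {m : ℕ} {r : ℝ} (hr : 0 ≤ r) : 0 ≤ chiPDF m r := by
  have hΓ : 0 ≤ Real.Gamma ((m : ℝ) / 2) := by
    rcases Nat.eq_zero_or_pos m with h | h
    · simp [h, Real.Gamma_zero]
    · exact (Real.Gamma_pos_of_pos (by positivity)).le
  have h2 : (0:ℝ) < 2 ^ (1 - (m : ℝ) / 2) := Real.rpow_pos_of_pos two_pos _
  unfold chiPDF
  have := Real.exp_pos (-r ^ 2 / 2)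
  positivity

lemma chiPDF_integrable (m : ℕ) : Integrable (chiPDF m) := by
  have hs : (-1 : ℝ) < ((m - 1 : ℕ) : ℝ) := by
    have : (0:ℝ) ≤ ((m - 1 : ℕ) : ℝ) := Nat.cast_nonneg _
    linarith
  have h := (integrable_rpow_mul_exp_neg_mul_sq (by norm_num : (0:ℝ) < 1/2) hs).const_mul
    (2 ^ (1 - (m : ℝ) / 2) / Real.Gamma ((m : ℝ) / 2))
  apply h.congr
  refine Filter.Eventually.of_forall fun r => ?_
  simp only [Real.rpow_natCast]
  unfold chiPDF
  ring_nf

/-- at a 𝔷-uniform Slater point `x̄`, for every fixed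
`(c, v) ∈ 𝒞 × S^{m-1}`, the function `x ↦ e_c(x, v)` is continuous at `x̄`. -/
theorem radialE_continuousAt_of_uniformSlater
    {n m p : ℕ} (hn : 0 < n) (hm : 0 < m) (hp : 0 < p)
    (𝒞 : Set (EuclideanSpace ℝ (Fin p))) (h𝒞 : MeasurableSet 𝒞)
    (z : EuclideanSpace ℝ (Fin p) → EuclideanSpace ℝ (Fin m))
    (L : EuclideanSpace ℝ (Fin p) → Matrix (Fin m) (Fin m) ℝ)
    (hz : Measurable fun c : 𝒞 => z c)
    (hL : ∀ i j, Measurable fun c : 𝒞 => L c i j)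
    (g : EuclideanSpace ℝ (Fin n) → EuclideanSpace ℝ (Fin m) → ℝ)
    (hg : Continuous (Function.uncurry g))
    (hconv : ∀ x, ConvexOn ℝ Set.univ (g x))
    (xbar : EuclideanSpace ℝ (Fin n))
    (hSlater : ∃ U : Set (EuclideanSpace ℝ (Fin n)), IsOpen U ∧ xbar ∈ U ∧
      ∃ γ₀ > 0, ∀ x ∈ U, ∀ c ∈ 𝒞, g x (z c) < -γ₀) :
    ∀ c ∈ 𝒞, ∀ v ∈ Metric.sphere (0 : EuclideanSpace ℝ (Fin m)) 1,
      ContinuousAt (fun x => radialE g z L c x v) xbar := by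
  classical
  intro c hc v hv
  obtain ⟨U, hUopen, hxU, γ₀, hγ₀, hSl⟩ := hSlater
  -- notation
  set φ : EuclideanSpace ℝ (Fin n) → ℝ → ℝ := fun x r => g x (r • mApp (L c) v + z c) with hφdef
  have hSx : ∀ x, radialSet g z L c x v = {r : ℝ | 0 ≤ r ∧ φ x r ≤ 0} := fun _ => rfl
  set e : EuclideanSpace ℝ (Fin n) → ℝ := fun x => radialE g z L c x v with hedef
  have hee : ∀ x, e x = ∫ r in {r : ℝ | 0 ≤ r ∧ φ x r ≤ 0}, chiPDF m r := fun _ => rfl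
  -- continuity of φ
  have hφc : Continuous (fun q : EuclideanSpace ℝ (Fin n) × ℝ => φ q.1 q.2) := by
    show Continuous fun q : EuclideanSpace ℝ (Fin n) × ℝ =>
      Function.uncurry g (q.1, q.2 • mApp (L c) v + z c)
    exact hg.comp (continuous_fst.prodMk
      ((continuous_snd.smul continuous_const).add continuous_const))
  have hφx : ∀ x, Continuous (φ x) := fun x => hφc.comp (Continuous.prodMk_right x)
  -- convexity of φ x
  have hconvr : ∀ x, ConvexOn ℝ (Set.univ : Set ℝ) (φ x) := by
    intro x
    refine ⟨convex_univ, fun r _ s _ ta tb hta htb hab => ?_⟩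
    have hpt : (ta * r + tb * s) • mApp (L c) v + z c
        = ta • (r • mApp (L c) v + z c) + tb • (s • mApp (L c) v + z c) := by
      match_scalars
      · ring
      · linear_combination (-1 : ℝ) * hab
    calc φ x (ta • r + tb • s)
        = g x (ta • (r • mApp (L c) v + z c) + tb • (s • mApp (L c) v + z c)) := by
          show g x ((ta • r + tb • s) • mApp (L c) v + z c) = _
          rw [smul_eq_mul, smul_eq_mul, hpt]
      _ ≤ ta • g x (r • mApp (L c) v + z c) + tb • g x (s • mApp (L c) v + z c) :=
          (hconv x).2 (Set.mem_univ (r • mApp (L c) v + z c))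
            (Set.mem_univ (s • mApp (L c) v + z c)) hta htb hab
      _ = ta • φ x r + tb • φ x s := rfl
  -- basic facts about the sets
  have hSclosed : ∀ x, IsClosed {r : ℝ | 0 ≤ r ∧ φ x r ≤ 0} := by
    intro x
    have : {r : ℝ | 0 ≤ r ∧ φ x r ≤ 0} = Ici 0 ∩ (φ x) ⁻¹' (Iic 0) := by
      ext r
      simp only [mem_setOf_eq, mem_inter_iff, mem_Ici, mem_preimage, mem_Iic]
    rw [this]
    exact isClosed_Ici.inter (isClosed_Iic.preimage (hφx x))
  have hSmeas : ∀ x, MeasurableSet {r : ℝ | 0 ≤ r ∧ φ x r ≤ 0} :=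
    fun x => (hSclosed x).measurableSet
  have hSsub : ∀ x, {r : ℝ | 0 ≤ r ∧ φ x r ≤ 0} ⊆ Ici 0 := fun x r hr => hr.1
  have hint := chiPDF_integrable m
  -- F t = ∫ over Icc 0 t
  set F : ℝ → ℝ := fun t => ∫ r in Icc 0 t, chiPDF m r with hFdef
  have hnnIcc : ∀ t : ℝ, 0 ≤ᵐ[volume.restrict (Icc (0:ℝ) t)] chiPDF m := fun t =>
    (ae_restrict_iff' measurableSet_Icc).2 (Filter.Eventually.of_forall
      fun r hr => chiPDF_nonneg hr.1)
  have hnnIci : 0 ≤ᵐ[volume.restrict (Ici (0:ℝ))] chiPDF m :=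
    (ae_restrict_iff' measurableSet_Ici).2 (Filter.Eventually.of_forall
      fun r hr => chiPDF_nonneg hr)
  have hFmono : ∀ s t : ℝ, s ≤ t → F s ≤ F t := by
    intro s t hst
    exact setIntegral_mono_set hint.integrableOn (hnnIcc t)
      (HasSubset.Subset.eventuallyLE (Icc_subset_Icc le_rfl hst))
  have hle : ∀ x t, {r : ℝ | 0 ≤ r ∧ φ x r ≤ 0} ⊆ Icc 0 t → e x ≤ F t := by
    intro x t hsub
    rw [hee]
    exact setIntegral_mono_set hint.integrableOn (hnnIcc t) hsub.eventuallyLE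
  have hge : ∀ x t, Icc (0:ℝ) t ⊆ {r : ℝ | 0 ≤ r ∧ φ x r ≤ 0} → F t ≤ e x := by
    intro x t hsub
    rw [hee]
    refine setIntegral_mono_set hint.integrableOn ?_ hsub.eventuallyLE
    exact (ae_restrict_iff' (hSmeas x)).2 (Filter.Eventually.of_forall
      fun r hr => chiPDF_nonneg hr.1)
  have hleI : ∀ x, e x ≤ ∫ r in Ici (0:ℝ), chiPDF m r := by
    intro x
    rw [hee]
    exact setIntegral_mono_set hint.integrableOn hnnIci (hSsub x).eventuallyLE
  -- continuity of F on positive reals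
  have hFcontAt : ∀ t : ℝ, 0 < t → ContinuousAt F t := by
    intro t ht
    have hG : Continuous fun b : ℝ => ∫ s in (0:ℝ)..b, chiPDF m s :=
      intervalIntegral.continuous_primitive
        (fun a b => (chiPDF_cont m).intervalIntegrable a b) 0
    have hFG : (fun b : ℝ => ∫ s in (0:ℝ)..b, chiPDF m s) =ᶠ[nhds t] F := by
      refine Filter.eventually_of_mem (Ioi_mem_nhds ht) fun b hb => ?_
      show ∫ s in (0:ℝ)..b, chiPDF m s = F b
      rw [intervalIntegral.integral_of_le (le_of_lt hb)]
      exact (integral_Icc_eq_integral_Ioc).symm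
    exact hG.continuousAt.congr hFG
  -- Slater at the fixed c
  have hφ0lt : ∀ x ∈ U, φ x 0 < 0 := by
    intro x hx
    have h := hSl x hx c hc
    have : φ x 0 = g x (z c) := by simp [hφdef]
    rw [this]; linarith
  have hf0 : φ xbar 0 < 0 := hφ0lt xbar hxU
  have hev1 : ∀ᶠ x in nhds xbar, φ x 0 < 0 :=
    Filter.eventually_of_mem (hUopen.mem_nhds hxU) hφ0lt
  -- the continuity statement via ε
  rw [ContinuousAt, Metric.tendsto_nhds]
  intro ε hε
  by_cases hA : ∃ R, 0 ≤ R ∧ 0 < φ xbar R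
  · -- bounded case
    obtain ⟨R₀, hR₀0, hR₀⟩ := hA
    have hR₀pos : 0 < R₀ := by
      rcases eq_or_lt_of_le hR₀0 with h | h
      · exfalso; rw [← h] at hR₀; linarith
      · exact h
    have hSbdd : BddAbove {r : ℝ | 0 ≤ r ∧ φ xbar r ≤ 0} := by
      refine ⟨R₀, fun r hr => ?_⟩
      by_contra hcon
      push_neg at hcon
      have := aux_convB (hconvr xbar) hf0 hR₀pos hcon.le hR₀
      exact absurd hr.2 (by linarith)
    have hSne : Set.Nonempty {r : ℝ | 0 ≤ r ∧ φ xbar r ≤ 0} := ⟨0, le_refl 0, hf0.le⟩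
    set Rb : ℝ := sSup {r : ℝ | 0 ≤ r ∧ φ xbar r ≤ 0} with hRbdef
    have hRbmem : Rb ∈ {r : ℝ | 0 ≤ r ∧ φ xbar r ≤ 0} :=
      (hSclosed xbar).csSup_mem hSne hSbdd
    have hRb0 : 0 ≤ Rb := hRbmem.1
    have hRbneg : φ xbar Rb ≤ 0 := hRbmem.2
    -- Rb is positive
    have hRbpos : 0 < Rb := by
      have hev : ∀ᶠ r in nhds (0:ℝ), φ xbar r < 0 :=
        ((hφx xbar).continuousAt).eventually (eventually_lt_nhds hf0)
      have hev' : ∀ᶠ r in nhdsWithin (0:ℝ) (Ioi 0), φ xbar r < 0 ∧ r ∈ Ioi (0:ℝ) :=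
        (hev.filter_mono nhdsWithin_le_nhds).and self_mem_nhdsWithin
      obtain ⟨r, hr1, hr2⟩ := hev'.exists
      have : r ≤ Rb := le_csSup hSbdd ⟨le_of_lt hr2, hr1.le⟩
      exact lt_of_lt_of_le hr2 this
    have hgt : ∀ r, Rb < r → 0 < φ xbar r := by
      intro r hr
      by_contra hcon
      push_neg at hcon
      have : r ≤ Rb := le_csSup hSbdd ⟨(hRb0.trans hr.le), hcon⟩
      linarith
    have hSeq : {r : ℝ | 0 ≤ r ∧ φ xbar r ≤ 0} = Icc 0 Rb := by
      ext r
      constructor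
      · intro hr; exact ⟨hr.1, le_csSup hSbdd hr⟩
      · intro hr
        refine ⟨hr.1, ?_⟩
        have key := aux_convA (hconvr xbar) hr.1 hr.2 hRbpos
        have h1 : 0 ≤ r / Rb := div_nonneg hr.1 hRb0
        have h2 : r / Rb ≤ 1 := (div_le_one hRbpos).2 hr.2
        nlinarith
    have hexbar : e xbar = F Rb := by rw [hee, hSeq]
    -- choose δ
    obtain ⟨δ₁, hδ₁pos, hδ₁⟩ := Metric.continuousAt_iff.1 (hFcontAt Rb hRbpos) (ε/3)
      (by linarith)
    set δ : ℝ := min (δ₁/2) (Rb/2) with hδdef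
    have hδpos : 0 < δ := lt_min (by linarith) (by linarith)
    have hδRb : δ < Rb := lt_of_le_of_lt (min_le_right _ _) (by linarith)
    have hδδ₁ : δ < δ₁ := lt_of_le_of_lt (min_le_left _ _) (by linarith)
    have hFhi : |F (Rb + δ) - F Rb| < ε/3 := by
      have := hδ₁ (show dist (Rb + δ) Rb < δ₁ by
        rw [Real.dist_eq]; rw [show Rb + δ - Rb = δ by ring, abs_of_pos hδpos]; exact hδδ₁)
      rwa [Real.dist_eq] at this
    have hFlo : |F (Rb - δ) - F Rb| < ε/3 := by
      have := hδ₁ (show dist (Rb - δ) Rb < δ₁ by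
        rw [Real.dist_eq]; rw [show Rb - δ - Rb = -δ by ring, abs_neg, abs_of_pos hδpos]
        exact hδδ₁)
      rwa [Real.dist_eq] at this
    -- eventual control
    have hφb : 0 < φ xbar (Rb + δ) := hgt _ (by linarith)
    have hev2 : ∀ᶠ x in nhds xbar, 0 < φ x (Rb + δ) := by
      have hcont : Continuous fun x => φ x (Rb + δ) :=
        hφc.comp (continuous_id.prodMk continuous_const)
      exact hcont.continuousAt.eventually (eventually_gt_nhds hφb)
    have hev3 : ∀ᶠ x in nhds xbar, ∀ r ∈ Icc (0:ℝ) (Rb - δ), φ x r < 0 := by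
      refine isCompact_Icc.eventually_forall_of_forall_eventually fun r hr => ?_
      have hφneg : φ xbar r < 0 := by
        have key := aux_convA (hconvr xbar) hr.1 (by linarith [hr.2] : r ≤ Rb) hRbpos
        have h1 : 0 ≤ r / Rb := div_nonneg hr.1 hRb0
        have h2 : δ / Rb ≤ 1 - r / Rb := by
          rw [le_sub_iff_add_le, ← add_div]
          exact (div_le_one hRbpos).2 (by linarith [hr.2])
        have h3 : 0 < δ / Rb := div_pos hδpos hRbpos
        nlinarith
      exact hφc.continuousAt.eventually (eventually_lt_nhds hφneg)
    filter_upwards [hev1, hev2, hev3] with x h1 h2 h3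
    have hub : {r : ℝ | 0 ≤ r ∧ φ x r ≤ 0} ⊆ Icc 0 (Rb + δ) := by
      intro r hr
      refine ⟨hr.1, ?_⟩
      by_contra hcon
      push_neg at hcon
      have := aux_convB (hconvr x) h1 (by linarith : (0:ℝ) < Rb + δ) hcon.le h2
      exact absurd hr.2 (by linarith)
    have hlb : Icc (0:ℝ) (Rb - δ) ⊆ {r : ℝ | 0 ≤ r ∧ φ x r ≤ 0} := by
      intro r hr
      exact ⟨hr.1, (h3 r hr).le⟩
    have hexu : e x ≤ F (Rb + δ) := hle x _ hub
    have hexl : F (Rb - δ) ≤ e x := hge x _ hlb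
    have hm1 : F (Rb - δ) ≤ F Rb := hFmono _ _ (by linarith)
    have hm2 : F Rb ≤ F (Rb + δ) := hFmono _ _ (by linarith)
    rw [Real.dist_eq, hexbar, abs_lt]
    rw [abs_lt] at hFhi hFlo
    constructor <;> linarith
  · -- unbounded case
    push_neg at hA
    have hSeq : {r : ℝ | 0 ≤ r ∧ φ xbar r ≤ 0} = Ici 0 := by
      ext r
      exact ⟨fun h => h.1, fun h => ⟨h, hA r h⟩⟩
    set I : ℝ := ∫ r in Ici (0:ℝ), chiPDF m r with hIdef
    have hexbar : e xbar = I := by rw [hee, hSeq]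
    have hstrict : ∀ r : ℝ, 0 ≤ r → φ xbar r < 0 := by
      intro r hr
      have key := aux_convA (hconvr xbar) hr (by linarith : r ≤ r + 1) (by linarith)
      have hA' : φ xbar (r + 1) ≤ 0 := hA _ (by linarith)
      have h1 : 0 ≤ r / (r + 1) := div_nonneg hr (by linarith)
      have h2 : r / (r + 1) < 1 := (div_lt_one (by linarith)).2 (by linarith)
      nlinarith
    -- F N → I
    have hunion : (⋃ N : ℕ, Icc (0:ℝ) N) = Ici 0 := by
      ext r
      simp only [mem_iUnion, mem_Icc, mem_Ici]
      constructor
      · rintro ⟨N, hN, -⟩; exact hN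
      · intro hr
        obtain ⟨N, hN⟩ := exists_nat_ge r
        exact ⟨N, hr, hN⟩
    have htd : Filter.Tendsto (fun N : ℕ => F (N : ℝ)) Filter.atTop (nhds I) := by
      have h := tendsto_setIntegral_of_monotone (μ := volume) (f := chiPDF m)
        (s := fun N : ℕ => Icc (0:ℝ) N) (fun _ => measurableSet_Icc)
        (fun i j hij => Icc_subset_Icc le_rfl (Nat.cast_le.2 hij))
        (by rw [hunion]; exact hint.integrableOn)
      rwa [hunion] at h
    obtain ⟨N, hN⟩ := (htd.eventually (eventually_gt_nhds
      (show I - ε/2 < I by linarith))).exists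
    have hev3 : ∀ᶠ x in nhds xbar, ∀ r ∈ Icc (0:ℝ) (N : ℝ), φ x r < 0 := by
      refine isCompact_Icc.eventually_forall_of_forall_eventually fun r hr => ?_
      exact hφc.continuousAt.eventually (eventually_lt_nhds (hstrict r hr.1))
    filter_upwards [hev3] with x h3
    have hlb : Icc (0:ℝ) (N:ℝ) ⊆ {r : ℝ | 0 ≤ r ∧ φ x r ≤ 0} := by
      intro r hr
      exact ⟨hr.1, (h3 r hr).le⟩
    have hexl : F (N:ℝ) ≤ e x := hge x _ hlb
    have hexu : e x ≤ I := hleI x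
    rw [Real.dist_eq, hexbar, abs_lt]
    constructor <;> linarith

end
end

section
/- Suppose x̄ is a 𝔷-uniform Slater point with associated neighborhood U. Then the radius function, viewed as the map (x, v, c) ↦ ρ_c(x, v) from U × S^{m−1} × 𝒞 to [0, ∞], is measurable with respect to the product of the Borel σ-algebras; indeed, for every ν ≥ 0, {(x, v, c) ∈ U × S^{m−1} × 𝒞 : ρ_c(x, v) > ν} = {(x, v, c) ∈ U × S^{m−1} × 𝒞 : g(x, ν·𝔏(c)v + 𝔷(c)) < 0}. -/
open MeasureTheory Real Set
open scoped RealInnerProductSpace ENNReal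

noncomputable section

/-- The radius function `ρ_c(x, v) ∈ [0, ∞]`,
the supremum of `{r ≥ 0 : g(x, r·𝔏(c)v + 𝔷(c)) ≤ 0}`. -/
def rho {n m p : ℕ} (g : EuclideanSpace ℝ (Fin n) → EuclideanSpace ℝ (Fin m) → ℝ)
    (z : EuclideanSpace ℝ (Fin p) → EuclideanSpace ℝ (Fin m))
    (L : EuclideanSpace ℝ (Fin p) → Matrix (Fin m) (Fin m) ℝ)
    (c : EuclideanSpace ℝ (Fin p)) (x : EuclideanSpace ℝ (Fin n))
    (v : EuclideanSpace ℝ (Fin m)) : ℝ≥0∞ :=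
  sSup (ENNReal.ofReal '' radialSet g z L c x v)


lemma rho_key {n m p : ℕ} (g : EuclideanSpace ℝ (Fin n) → EuclideanSpace ℝ (Fin m) → ℝ)
    (z : EuclideanSpace ℝ (Fin p) → EuclideanSpace ℝ (Fin m))
    (L : EuclideanSpace ℝ (Fin p) → Matrix (Fin m) (Fin m) ℝ)
    (hg : Continuous (Function.uncurry g)) (hconv : ∀ x, ConvexOn ℝ Set.univ (g x))
    (c : EuclideanSpace ℝ (Fin p)) (x : EuclideanSpace ℝ (Fin n))
    (v : EuclideanSpace ℝ (Fin m)) (hsl : g x (z c) < 0) (ν : ℝ) (hν : 0 ≤ ν) :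
    ENNReal.ofReal ν < rho g z L c x v ↔ g x (ν • mApp (L c) v + z c) < 0 := by
  set w := mApp (L c) v with hw
  have hcont : Continuous fun r : ℝ => g x (r • w + z c) :=
    hg.comp ((continuous_const : Continuous fun _ : ℝ => x).prodMk
      ((continuous_id.smul continuous_const).add continuous_const))
  constructor
  · intro h
    rw [rho, lt_sSup_iff] at h
    obtain ⟨b, ⟨s, hs, rfl⟩, hb⟩ := h
    have hνs : ν < s := (ENNReal.ofReal_lt_ofReal_iff_of_nonneg hν).1 hb
    have hspos : 0 < s := lt_of_le_of_lt hν hνs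
    set t := ν / s with ht
    have ht0 : 0 ≤ t := div_nonneg hν hspos.le
    have ht1 : t < 1 := (div_lt_one hspos).2 hνs
    have hts : t * s = ν := div_mul_cancel₀ ν hspos.ne'
    have hcomb : ν • w + z c = (1 - t) • z c + t • (s • w + z c) := by
      rw [smul_add, smul_smul, hts]
      module
    have hle := (hconv x).2 (Set.mem_univ (z c)) (Set.mem_univ (s • w + z c))
      (by linarith : (0:ℝ) ≤ 1 - t) ht0 (by ring)
    have hs2 : g x (s • w + z c) ≤ 0 := hs.2
    rw [hcomb]
    simp only [smul_eq_mul] at hle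
    nlinarith [mul_pos (by linarith : (0:ℝ) < 1 - t) (by linarith : (0:ℝ) < -g x (z c)),
      mul_nonneg ht0 (neg_nonneg.2 hs2)]
  · intro h
    have hopen : IsOpen {r : ℝ | g x (r • w + z c) < 0} :=
      isOpen_lt hcont continuous_const
    obtain ⟨ε, hε, hball⟩ := Metric.isOpen_iff.1 hopen ν h
    have hmem : ν + ε / 2 ∈ radialSet g z L c x v := by
      refine ⟨by linarith, le_of_lt (hball ?_)⟩
      simp only [Metric.mem_ball, Real.dist_eq]
      rw [abs_of_nonneg (by linarith)]
      linarith
    refine lt_of_lt_of_le ?_ (le_sSup ⟨_, hmem, rfl⟩)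
    exact (ENNReal.ofReal_lt_ofReal_iff_of_nonneg hν).2 (by linarith)

/-- on the Slater neighborhood `U`, the radius function
`(x, v, c) ↦ ρ_c(x, v)` is Borel measurable on `U × S^{m-1} × 𝒞`, and for
every `ν ≥ 0` its strict superlevel set is described by a strict inequality
on `g`. -/
theorem rho_measurable_and_superlevel
    {n m p : ℕ} (hn : 0 < n) (hm : 0 < m) (hp : 0 < p)
    (𝒞 : Set (EuclideanSpace ℝ (Fin p))) (h𝒞 : MeasurableSet 𝒞)
    (z : EuclideanSpace ℝ (Fin p) → EuclideanSpace ℝ (Fin m))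
    (L : EuclideanSpace ℝ (Fin p) → Matrix (Fin m) (Fin m) ℝ)
    (hz : Measurable fun c : 𝒞 => z c)
    (hL : ∀ i j, Measurable fun c : 𝒞 => L c i j)
    (g : EuclideanSpace ℝ (Fin n) → EuclideanSpace ℝ (Fin m) → ℝ)
    (hg : Continuous (Function.uncurry g))
    (hconv : ∀ x, ConvexOn ℝ Set.univ (g x))
    (xbar : EuclideanSpace ℝ (Fin n)) (U : Set (EuclideanSpace ℝ (Fin n))) (hU : IsOpen U) (hxU : xbar ∈ U)
    (γ₀ : ℝ) (hγ₀ : 0 < γ₀) (hSlater : ∀ x ∈ U, ∀ c ∈ 𝒞, g x (z c) < -γ₀) :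
    (Measurable fun q : U × Metric.sphere (0 : EuclideanSpace ℝ (Fin m)) 1 × 𝒞 =>
      rho g z L (↑q.2.2) (↑q.1) (↑q.2.1)) ∧
    ∀ ν : ℝ, 0 ≤ ν →
      {q : EuclideanSpace ℝ (Fin n) × EuclideanSpace ℝ (Fin m) × EuclideanSpace ℝ (Fin p) | q.1 ∈ U ∧ q.2.1 ∈ Metric.sphere (0 : EuclideanSpace ℝ (Fin m)) 1 ∧
          q.2.2 ∈ 𝒞 ∧ ENNReal.ofReal ν < rho g z L q.2.2 q.1 q.2.1} =
      {q : EuclideanSpace ℝ (Fin n) × EuclideanSpace ℝ (Fin m) × EuclideanSpace ℝ (Fin p) | q.1 ∈ U ∧ q.2.1 ∈ Metric.sphere (0 : EuclideanSpace ℝ (Fin m)) 1 ∧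
          q.2.2 ∈ 𝒞 ∧ g q.1 (ν • mApp (L q.2.2) q.2.1 + z q.2.2) < 0} := by
  have hc : Measurable fun q : U × Metric.sphere (0 : EuclideanSpace ℝ (Fin m)) 1 × 𝒞 => q.2.2 :=
    measurable_snd.snd
  have hv : Measurable fun q : U × Metric.sphere (0 : EuclideanSpace ℝ (Fin m)) 1 × 𝒞 =>
      (↑q.2.1 : EuclideanSpace ℝ (Fin m)) :=
    measurable_subtype_coe.comp measurable_snd.fst
  have hG : ∀ ν : ℝ, Measurable fun q : U × Metric.sphere (0 : EuclideanSpace ℝ (Fin m)) 1 × 𝒞 =>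
      g (↑q.1) (ν • mApp (L ↑q.2.2) ↑q.2.1 + z ↑q.2.2) := by
    intro ν
    have hV : Measurable fun q : U × Metric.sphere (0 : EuclideanSpace ℝ (Fin m)) 1 × 𝒞 =>
        (ν • mApp (L ↑q.2.2) ↑q.2.1 + z ↑q.2.2 : EuclideanSpace ℝ (Fin m)) := by
      refine (WithLp.measurable_toLp 2 _).comp (f := fun q : U × Metric.sphere (0 : EuclideanSpace ℝ (Fin m)) 1 × 𝒞 =>
          WithLp.ofLp (ν • mApp (L ↑q.2.2) ↑q.2.1 + z ↑q.2.2 : EuclideanSpace ℝ (Fin m))) ?_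
      refine measurable_pi_iff.2 fun i => ?_
      have h1 : ∀ (A : Matrix (Fin m) (Fin m) ℝ) (u : EuclideanSpace ℝ (Fin m)),
          mApp A u i = ∑ j, A i j * u j := by
        intro A u
        simp [mApp, Matrix.toEuclideanLin_apply, Matrix.mulVec, dotProduct]
      simp only [PiLp.add_apply, PiLp.smul_apply, smul_eq_mul, h1]
      refine Measurable.add (Measurable.const_mul ?_ ν) ?_
      · exact Finset.measurable_sum _ fun j _ =>
          ((hL i j).comp hc).mul ((measurable_pi_apply j).comp ((WithLp.measurable_ofLp 2 _).comp hv))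
      · exact (measurable_pi_apply i).comp ((WithLp.measurable_ofLp 2 _).comp (hz.comp hc))
    exact hg.measurable.comp ((measurable_subtype_coe.comp measurable_fst).prodMk hV)
  constructor
  · refine measurable_of_Ioi fun a => ?_
    rcases eq_or_ne a ⊤ with rfl | ha
    · simp
    · have hν : (0:ℝ) ≤ a.toReal := ENNReal.toReal_nonneg
      have hset : (fun q : U × Metric.sphere (0 : EuclideanSpace ℝ (Fin m)) 1 × 𝒞 =>
            rho g z L (↑q.2.2) (↑q.1) (↑q.2.1)) ⁻¹' Ioi a =
          (fun q : U × Metric.sphere (0 : EuclideanSpace ℝ (Fin m)) 1 × 𝒞 =>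
            g (↑q.1) (a.toReal • mApp (L ↑q.2.2) ↑q.2.1 + z ↑q.2.2)) ⁻¹' Iio 0 := by
        ext q
        simp only [mem_preimage, mem_Ioi, mem_Iio]
        conv_lhs => rw [← ENNReal.ofReal_toReal ha]
        exact rho_key g z L hg hconv _ _ _
          (lt_trans (hSlater _ q.1.2 _ q.2.2.2) (by linarith)) _ hν
      rw [hset]
      exact (hG a.toReal) measurableSet_Iio
  · intro ν hν
    ext q
    simp only [mem_setOf_eq]
    exact and_congr_right fun h1 => and_congr_right fun _ => and_congr_right fun h3 =>
      rho_key g z L hg hconv _ _ _ (lt_trans (hSlater _ h1 _ h3) (by linarith)) ν hν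

end
end

section
/- Suppose x̄ is a 𝔷-uniform Slater point with associated neighborhood U. Then for every fixed c ∈ 𝒞, the radius function is sequentially continuous on U × S^{m−1} as a map into [0, ∞]: for every sequence (x_k, v_k) → (x, v) in U × S^{m−1}, one has ρ_c(x_k, v_k) → ρ_c(x, v). -/
open MeasureTheory Real Set
open scoped RealInnerProductSpace ENNReal

noncomputable section

/-- Strict negativity on the interior of the radial segment, from convexity. -/
lemma key_strict {n m : ℕ} (g : EuclideanSpace ℝ (Fin n) → EuclideanSpace ℝ (Fin m) → ℝ)
    (hconv : ∀ x, ConvexOn ℝ Set.univ (g x)) (x : EuclideanSpace ℝ (Fin n))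
    (w z0 : EuclideanSpace ℝ (Fin m)) (h0 : g x z0 < 0) {r s : ℝ}
    (hr : 0 ≤ r) (hrs : r < s) (hs : g x (s • w + z0) ≤ 0) :
    g x (r • w + z0) < 0 := by
  have hs0 : 0 < s := lt_of_le_of_lt hr hrs
  set t := r / s with ht
  have ht0 : 0 ≤ t := div_nonneg hr hs0.le
  have ht1 : t < 1 := (div_lt_one hs0).2 hrs
  have hts : t * s = r := div_mul_cancel₀ r hs0.ne'
  have hcomb : (1 - t) • z0 + t • (s • w + z0) = r • w + z0 := by
    rw [smul_add, smul_smul, hts, sub_smul, one_smul]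
    abel
  have hineq := (hconv x).2 (Set.mem_univ z0) (Set.mem_univ (s • w + z0))
    (by linarith : (0:ℝ) ≤ 1 - t) ht0 (by ring)
  rw [hcomb, smul_eq_mul, smul_eq_mul] at hineq
  have h1 : (1 - t) * g x z0 < 0 := mul_neg_of_pos_of_neg (by linarith) h0
  have h2 : t * g x (s • w + z0) ≤ 0 := mul_nonpos_of_nonneg_of_nonpos ht0 hs
  linarith

/-- on the Slater neighborhood `U`, for fixed `c ∈ 𝒞`, the radius
function is sequentially continuous on `U × S^{m-1}` as a map into `[0, ∞]`. -/
theorem rho_seq_continuous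
    {n m p : ℕ} (hn : 0 < n) (hm : 0 < m) (hp : 0 < p)
    (𝒞 : Set (EuclideanSpace ℝ (Fin p))) (h𝒞 : MeasurableSet 𝒞)
    (z : EuclideanSpace ℝ (Fin p) → EuclideanSpace ℝ (Fin m))
    (L : EuclideanSpace ℝ (Fin p) → Matrix (Fin m) (Fin m) ℝ)
    (hz : Measurable fun c : 𝒞 => z c)
    (hL : ∀ i j, Measurable fun c : 𝒞 => L c i j)
    (g : EuclideanSpace ℝ (Fin n) → EuclideanSpace ℝ (Fin m) → ℝ)
    (hg : Continuous (Function.uncurry g))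
    (hconv : ∀ x, ConvexOn ℝ Set.univ (g x))
    (xbar : EuclideanSpace ℝ (Fin n)) (U : Set (EuclideanSpace ℝ (Fin n))) (hU : IsOpen U) (hxU : xbar ∈ U)
    (γ₀ : ℝ) (hγ₀ : 0 < γ₀) (hSlater : ∀ x ∈ U, ∀ c ∈ 𝒞, g x (z c) < -γ₀) :
    ∀ c ∈ 𝒞, ∀ x ∈ U, ∀ v ∈ Metric.sphere (0 : EuclideanSpace ℝ (Fin m)) 1,
      ∀ (xk : ℕ → EuclideanSpace ℝ (Fin n)) (vk : ℕ → EuclideanSpace ℝ (Fin m)),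
        (∀ k, xk k ∈ U) → (∀ k, vk k ∈ Metric.sphere (0 : EuclideanSpace ℝ (Fin m)) 1) →
        Filter.Tendsto xk Filter.atTop (nhds x) →
        Filter.Tendsto vk Filter.atTop (nhds v) →
        Filter.Tendsto (fun k => rho g z L c (xk k) (vk k)) Filter.atTop
          (nhds (rho g z L c x v)) := by
  intro c hc x hx v hv xk vk hxkU hvkS hxk hvk
  -- continuity of (y, u) ↦ g y (r • mApp (L c) u + z c) for fixed r
  have hmApp : Continuous fun u : EuclideanSpace ℝ (Fin m) => mApp (L c) u := by
    exact (Matrix.toEuclideanLin (L c)).continuous_of_finiteDimensional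
  have hF : ∀ r : ℝ, Continuous fun q : EuclideanSpace ℝ (Fin n) × EuclideanSpace ℝ (Fin m) =>
      g q.1 (r • mApp (L c) q.2 + z c) := by
    intro r
    have : Continuous fun q : EuclideanSpace ℝ (Fin n) × EuclideanSpace ℝ (Fin m) =>
        (q.1, r • mApp (L c) q.2 + z c) :=
      continuous_fst.prodMk (((hmApp.comp continuous_snd).const_smul r).add continuous_const)
    exact hg.comp this
  have htend : ∀ r : ℝ,
      Filter.Tendsto (fun k => g (xk k) (r • mApp (L c) (vk k) + z c)) Filter.atTop
        (nhds (g x (r • mApp (L c) v + z c))) := fun r =>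
    ((hF r).tendsto (x, v)).comp (hxk.prodMk_nhds hvk)
  have hSl : ∀ y ∈ U, g y (z c) < 0 := fun y hy =>
    lt_trans (hSlater y hy c hc) (by linarith)
  rw [tendsto_order]
  constructor
  · -- lower bound
    intro a ha
    rw [rho] at ha
    obtain ⟨b, hb, hab⟩ := lt_sSup_iff.mp ha
    obtain ⟨s, hsmem, rfl⟩ := hb
    have haT : a ≠ ⊤ := hab.ne_top
    have has : a.toReal < s := by
      rwa [ENNReal.lt_ofReal_iff_toReal_lt haT] at hab
    set r := (a.toReal + s) / 2 with hrdef
    have hr0 : 0 ≤ r := by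
      have h1 := ENNReal.toReal_nonneg (a := a)
      have h2 := hsmem.1
      simp only [hrdef]; linarith
    have hrs : r < s := by simp only [hrdef]; linarith
    have har : a.toReal < r := by simp only [hrdef]; linarith
    have hneg : g x (r • mApp (L c) v + z c) < 0 :=
      key_strict g hconv x _ _ (hSl x hx) hr0 hrs hsmem.2
    have hev : ∀ᶠ k in Filter.atTop, g (xk k) (r • mApp (L c) (vk k) + z c) < 0 :=
      (htend r).eventually_lt_const hneg
    filter_upwards [hev] with k hk
    calc a < ENNReal.ofReal r := (ENNReal.lt_ofReal_iff_toReal_lt haT).2 har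
      _ ≤ rho g z L c (xk k) (vk k) :=
        le_sSup ⟨r, ⟨hr0, hk.le⟩, rfl⟩
  · -- upper bound
    intro b hb
    obtain ⟨r, hr0, hρr, hrb⟩ := ENNReal.lt_iff_exists_real_btwn.mp hb
    have hrpos : g x (r • mApp (L c) v + z c) > 0 := by
      by_contra hle
      push_neg at hle
      have : ENNReal.ofReal r ≤ rho g z L c x v := le_sSup ⟨r, ⟨hr0, hle⟩, rfl⟩
      exact absurd (lt_of_le_of_lt this hρr) (lt_irrefl _)
    have hev : ∀ᶠ k in Filter.atTop, 0 < g (xk k) (r • mApp (L c) (vk k) + z c) :=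
      (htend r).eventually_const_lt hrpos
    filter_upwards [hev] with k hk
    have hbound : rho g z L c (xk k) (vk k) ≤ ENNReal.ofReal r := by
      apply sSup_le
      rintro _ ⟨s, ⟨hs0, hsle⟩, rfl⟩
      apply ENNReal.ofReal_le_ofReal
      by_contra hgt
      push_neg at hgt
      exact absurd (key_strict g hconv (xk k) _ _ (hSl (xk k) (hxkU k)) hr0 hgt hsle)
        (not_lt.2 hk.le)
    exact lt_of_le_of_lt hbound hrb


end
end

section
/- Suppose x̄ is a 𝔷-uniform Slater point with associated neighborhood U, and let (x, v, c) ∈ U × S^{m−1} × 𝒞 be such that ρ_c(x, v) < ∞. Then the function x' ↦ ρ_c(x', v) is continuously differentiable in a neighborhood of x, with gradient ∇_x ρ_c(x, v) = −∇_x g(x, 𝔷(c) + ρ_c(x,v)·𝔏(c)v) / ⟨∇_z g(x, 𝔷(c) + ρ_c(x,v)·𝔏(c)v), 𝔏(c)v⟩, where ∇_x g and ∇_z g denote the gradients of g with respect to its first and second arguments, and the denominator is strictly positive. -/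
open MeasureTheory Real Set
open scoped InnerProductSpace ENNReal

noncomputable section

lemma inner_gradient_apply {F : Type*} [NormedAddCommGroup F] [InnerProductSpace ℝ F]
    [CompleteSpace F] (f : F → ℝ) (y u : F) :
    ⟪gradient f y, u⟫_ℝ = fderiv ℝ f y u := by
  rw [gradient, ← InnerProductSpace.toDual_apply_apply, LinearIsometryEquiv.apply_symm_apply]

lemma rho_eq_ofReal {n m p : ℕ}
    (g : EuclideanSpace ℝ (Fin n) → EuclideanSpace ℝ (Fin m) → ℝ)
    (z : EuclideanSpace ℝ (Fin p) → EuclideanSpace ℝ (Fin m))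
    (L : EuclideanSpace ℝ (Fin p) → Matrix (Fin m) (Fin m) ℝ)
    (c : EuclideanSpace ℝ (Fin p)) (x : EuclideanSpace ℝ (Fin n))
    (v : EuclideanSpace ℝ (Fin m))
    (hconv : ∀ x, ConvexOn ℝ Set.univ (g x))
    (hx0 : g x (z c) < 0) {t : ℝ} (ht : 0 < t)
    (hroot : g x (t • mApp (L c) v + z c) = 0) :
    rho g z L c x v = ENNReal.ofReal t := by
  set w := mApp (L c) v with hw
  have hub : ∀ s ∈ radialSet g z L c x v, s ≤ t := by
    rintro s ⟨hs0, hsle⟩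
    by_contra hcon
    push_neg at hcon
    have hspos : 0 < s := lt_trans ht hcon
    have hsne : s ≠ 0 := ne_of_gt hspos
    have hcomb : (t/s) • (s • w + z c) + (1 - t/s) • z c = t • w + z c := by
      rw [smul_add, smul_smul, div_mul_cancel₀ t hsne, add_assoc, ← add_smul]
      norm_num
    have ha : (0:ℝ) ≤ t/s := by positivity
    have hb : (0:ℝ) ≤ 1 - t/s := by
      rw [sub_nonneg]; exact le_of_lt ((div_lt_one hspos).2 hcon)
    have hab : t/s + (1 - t/s) = 1 := by ring
    have hkey := (hconv x).2 (Set.mem_univ (s • w + z c)) (Set.mem_univ (z c))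
      ha hb hab
    rw [hcomb, hroot] at hkey
    have h3 : (t/s) * g x (s • w + z c) ≤ 0 :=
      mul_nonpos_of_nonneg_of_nonpos (by positivity) hsle
    have h4 : (1 - t/s) * g x (z c) < 0 :=
      mul_neg_of_pos_of_neg (by have := (div_lt_one hspos).2 hcon; linarith) hx0
    have : (0:ℝ) ≤ (t/s) * g x (s • w + z c) + (1 - t/s) * g x (z c) := by
      simpa using hkey
    linarith
  have htS : t ∈ radialSet g z L c x v := ⟨ht.le, hroot.le⟩
  refine le_antisymm (sSup_le ?_) (le_sSup ⟨t, htS, rfl⟩)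
  rintro b ⟨s, hsS, rfl⟩
  exact ENNReal.ofReal_le_ofReal (hub s hsS)

set_option maxHeartbeats 1000000 in
/-- on the Slater neighborhood `U`, if `ρ_c(x, v) < ∞`, then
`x' ↦ ρ_c(x', v)` is continuously differentiable near `x`, its gradient at `x`
being `-∇_x g(x, 𝔷(c) + ρ_c(x,v)·𝔏(c)v) / ⟪∇_z g(x, 𝔷(c) + ρ_c(x,v)·𝔏(c)v), 𝔏(c)v⟫`,
with strictly positive denominator. -/
theorem rho_contDiff_gradient
    {n m p : ℕ} (hn : 0 < n) (hm : 0 < m) (hp : 0 < p)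
    (𝒞 : Set (EuclideanSpace ℝ (Fin p))) (h𝒞 : MeasurableSet 𝒞)
    (z : EuclideanSpace ℝ (Fin p) → EuclideanSpace ℝ (Fin m))
    (L : EuclideanSpace ℝ (Fin p) → Matrix (Fin m) (Fin m) ℝ)
    (hz : Measurable fun c : 𝒞 => z c)
    (hL : ∀ i j, Measurable fun c : 𝒞 => L c i j)
    (g : EuclideanSpace ℝ (Fin n) → EuclideanSpace ℝ (Fin m) → ℝ)
    (hg : ContDiff ℝ 1 (Function.uncurry g))
    (hconv : ∀ x, ConvexOn ℝ Set.univ (g x))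
    (xbar : EuclideanSpace ℝ (Fin n)) (U : Set (EuclideanSpace ℝ (Fin n))) (hU : IsOpen U) (hxU : xbar ∈ U)
    (γ₀ : ℝ) (hγ₀ : 0 < γ₀) (hSlater : ∀ x ∈ U, ∀ c ∈ 𝒞, g x (z c) < -γ₀) :
    ∀ x ∈ U, ∀ v ∈ Metric.sphere (0 : EuclideanSpace ℝ (Fin m)) 1, ∀ c ∈ 𝒞,
      rho g z L c x v ≠ ⊤ →
      ∃ W : Set (EuclideanSpace ℝ (Fin n)), IsOpen W ∧ x ∈ W ∧
        ContDiffOn ℝ 1 (fun x' => (rho g z L c x' v).toReal) W ∧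
        0 < ⟪gradient (fun z' => g x z') (z c + (rho g z L c x v).toReal • mApp (L c) v), mApp (L c) v⟫_ℝ ∧
        gradient (fun x' => (rho g z L c x' v).toReal) x =
          (-(⟪gradient (fun z' => g x z') (z c + (rho g z L c x v).toReal • mApp (L c) v),
              mApp (L c) v⟫_ℝ)⁻¹) •
            gradient (fun x' => g x' (z c + (rho g z L c x v).toReal • mApp (L c) v)) x := by
  intro x hxU' v hv c hc hfin
  classical
  set w : EuclideanSpace ℝ (Fin m) := mApp (L c) v with hwdef
  set zc : EuclideanSpace ℝ (Fin m) := z c with hzcdef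
  have hgc : Continuous (Function.uncurry g) := hg.continuous
  have hgd : Differentiable ℝ (Function.uncurry g) := hg.differentiable one_ne_zero
  -- the Slater bound on U
  have hS0 : ∀ x' ∈ U, g x' zc < -γ₀ := fun x' hx' => hSlater x' hx' c hc
  -- Step A : basic facts about ρ̄
  set S : Set ℝ := radialSet g z L c x v with hSdef
  have h0S : (0:ℝ) ∈ S := by
    refine ⟨le_refl 0, ?_⟩
    have := hS0 x hxU'
    simp only [zero_smul, zero_add]
    linarith
  have hSne : S.Nonempty := ⟨0, h0S⟩
  have hScont : Continuous (fun s : ℝ => g x (s • w + zc)) := by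
    have : Continuous (fun s : ℝ => ((x : EuclideanSpace ℝ (Fin n)), s • w + zc)) :=
      continuous_const.prodMk ((continuous_id.smul continuous_const).add continuous_const)
    exact hgc.comp this
  have hclosed : IsClosed S := by
    have hSeq : S = Ici (0:ℝ) ∩ (fun s : ℝ => g x (s • w + zc)) ⁻¹' Iic 0 := rfl
    rw [hSeq]
    exact isClosed_Ici.inter (IsClosed.preimage hScont isClosed_Iic)
  have hbdd : BddAbove S := by
    by_contra hb
    obtain ⟨s, hsS, hs⟩ := not_bddAbove_iff.1 hb ((rho g z L c x v).toReal)
    have h1 : ENNReal.ofReal s ≤ rho g z L c x v := le_sSup ⟨s, hsS, rfl⟩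
    have h2 := ENNReal.toReal_mono hfin h1
    rw [ENNReal.toReal_ofReal hsS.1] at h2
    linarith
  set ρ : ℝ := sSup S with hρdef
  have hρS : ρ ∈ S := hclosed.csSup_mem hSne hbdd
  have hρnonneg : 0 ≤ ρ := hρS.1
  have hφρ : g x (ρ • w + zc) = 0 := by
    rcases lt_or_eq_of_le hρS.2 with hlt | heq
    · exfalso
      have hopen : IsOpen {s : ℝ | g x (s • w + zc) < 0} :=
        isOpen_lt hScont continuous_const
      obtain ⟨ε, hε, hball⟩ := Metric.isOpen_iff.1 hopen ρ hlt
      rw [← hwdef, ← hzcdef] at hlt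
      have hmem : ρ + ε/2 ∈ Metric.ball ρ ε := by
        rw [Metric.mem_ball, Real.dist_eq]
        have h5 : ρ + ε/2 - ρ = ε/2 := by ring
        rw [h5, abs_of_pos (half_pos hε)]
        linarith
      have hin : ρ + ε/2 ∈ S := ⟨by linarith, le_of_lt (hball hmem)⟩
      have := le_csSup hbdd hin
      linarith
    · exact heq
  have hρpos : 0 < ρ := by
    rcases eq_or_lt_of_le hρnonneg with heq | h
    · exfalso
      have := hS0 x hxU'
      rw [← heq, zero_smul, zero_add] at hφρ
      linarith
    · exact h
  have hrho_eq : rho g z L c x v = ENNReal.ofReal ρ :=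
    rho_eq_ofReal g z L c x v hconv (by have := hS0 x hxU'; linarith) hρpos hφρ
  have hρtoReal : (rho g z L c x v).toReal = ρ := by
    rw [hrho_eq, ENNReal.toReal_ofReal hρnonneg]
  -- Step B: derivative setup
  set y0 : EuclideanSpace ℝ (Fin m) := ρ • w + zc with hy0def
  set G : (EuclideanSpace ℝ (Fin n) × EuclideanSpace ℝ (Fin m)) →L[ℝ] ℝ := fderiv ℝ (Function.uncurry g) (x, y0) with hGdef
  have hG : HasFDerivAt (Function.uncurry g) G (x, y0) := (hgd _).hasFDerivAt
  set D : ℝ := G (0, w) with hDdef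
  -- D equals inner gradient
  have hpart_z : fderiv ℝ (fun y => g x y) y0 = G.comp (ContinuousLinearMap.inr ℝ (EuclideanSpace ℝ (Fin n)) (EuclideanSpace ℝ (Fin m))) := by
    have h1 : HasFDerivAt (fun y : EuclideanSpace ℝ (Fin m) => ((x : EuclideanSpace ℝ (Fin n)), y)) (ContinuousLinearMap.inr ℝ (EuclideanSpace ℝ (Fin n)) (EuclideanSpace ℝ (Fin m))) y0 :=
      hasFDerivAt_prodMk_right x y0
    exact (hG.comp y0 h1).fderiv
  have hDinner : ⟪gradient (fun y => g x y) y0, w⟫_ℝ = D := by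
    rw [inner_gradient_apply, hpart_z]
    simp [hDdef]
  -- positivity of D
  have hder : HasDerivAt (fun s : ℝ => g x (s • w + zc)) D ρ := by
    have h1 : HasDerivAt (fun s : ℝ => s • w + zc) w ρ := by
      have := (hasDerivAt_id ρ).smul_const w
      simpa using this.add_const zc
    have h2 : HasDerivAt (fun s : ℝ => ((x : EuclideanSpace ℝ (Fin n)), s • w + zc)) ((0, w)) ρ :=
      (hasDerivAt_const ρ (x : EuclideanSpace ℝ (Fin n))).prodMk h1
    have h3 := hG.comp_hasDerivAt ρ h2
    exact h3
  have hconv1 : ConvexOn ℝ univ (fun s : ℝ => g x (s • w + zc)) := by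
    have h1 := (hconv x).comp_affineMap (AffineMap.lineMap zc (zc + w))
    have h2 : ∀ s : ℝ, (g x ∘ (AffineMap.lineMap zc (zc + w))) s = g x (s • w + zc) := by
      intro s
      simp [AffineMap.lineMap_apply]
    convert h1 using 1
    · rfl
    · rfl
    · rfl
    · rfl
    · rfl
    ext s; exact (h2 s).symm
  have hslope : γ₀ / ρ ≤ D := by
    have h1 := hconv1.slope_le_deriv (mem_univ (0:ℝ)) (mem_univ ρ) hρpos hder.differentiableAt
    rw [hder.deriv] at h1
    have h2 : slope (fun s : ℝ => g x (s • w + zc)) 0 ρ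
        = (g x (ρ • w + zc) - g x ((0:ℝ) • w + zc)) / ρ := by
      rw [slope_def_field]; ring_nf
    rw [h2, hφρ] at h1
    have h3 : g x ((0:ℝ) • w + zc) < -γ₀ := by
      simpa [zero_smul, zero_add] using hS0 x hxU'
    have h4 : γ₀ / ρ ≤ (0 - g x ((0:ℝ) • w + zc)) / ρ := by
      gcongr
      linarith
    linarith
  have hDpos : 0 < D := lt_of_lt_of_le (div_pos hγ₀ hρpos) hslope
  -- Step C: inverse function theorem
  set a : (EuclideanSpace ℝ (Fin n)) × ℝ := (x, ρ) with hadef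
  set F : (EuclideanSpace ℝ (Fin n)) × ℝ → ℝ := fun q => g q.1 (q.2 • w + zc) with hFdef
  set B : ((EuclideanSpace ℝ (Fin n)) × ℝ) →L[ℝ] ℝ :=
    G.comp ((ContinuousLinearMap.fst ℝ (EuclideanSpace ℝ (Fin n)) ℝ).prod
      ((ContinuousLinearMap.snd ℝ (EuclideanSpace ℝ (Fin n)) ℝ).smulRight w)) with hBdef
  have hι : HasFDerivAt (fun q : (EuclideanSpace ℝ (Fin n)) × ℝ => (q.1, q.2 • w + zc))
      ((ContinuousLinearMap.fst ℝ (EuclideanSpace ℝ (Fin n)) ℝ).prod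
        ((ContinuousLinearMap.snd ℝ (EuclideanSpace ℝ (Fin n)) ℝ).smulRight w)) a :=
    hasFDerivAt_fst.prodMk ((hasFDerivAt_snd.smul_const w).add_const zc)
  have hB : HasFDerivAt F B a := by have := hG.comp a hι; exact this
  have hB01 : B (0, 1) = D := by
    simp [hBdef, hDdef]
  have hBlin : ∀ q : (EuclideanSpace ℝ (Fin n)) × ℝ, B q = B (q.1, 0) + q.2 * B (0, 1) := by
    intro q
    have hq : (q : (EuclideanSpace ℝ (Fin n)) × ℝ)
        = (q.1, 0) + q.2 • ((0 : EuclideanSpace ℝ (Fin n)), (1:ℝ)) := by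
      ext <;> simp
    conv_lhs => rw [hq]
    rw [_root_.map_add, _root_.map_smul]
    simp [smul_eq_mul]
  have hDne : B (0, 1) ≠ 0 := by rw [hB01]; exact ne_of_gt hDpos
  set Tlin : ((EuclideanSpace ℝ (Fin n)) × ℝ) →L[ℝ] ((EuclideanSpace ℝ (Fin n)) × ℝ) :=
    (ContinuousLinearMap.fst ℝ (EuclideanSpace ℝ (Fin n)) ℝ).prod B with hTlindef
  set Tinv : ((EuclideanSpace ℝ (Fin n)) × ℝ) →L[ℝ] ((EuclideanSpace ℝ (Fin n)) × ℝ) :=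
    (ContinuousLinearMap.fst ℝ (EuclideanSpace ℝ (Fin n)) ℝ).prod
      ((B (0,1))⁻¹ • ((ContinuousLinearMap.snd ℝ (EuclideanSpace ℝ (Fin n)) ℝ)
        - B.comp ((ContinuousLinearMap.fst ℝ (EuclideanSpace ℝ (Fin n)) ℝ).prod 0))) with hTinvdef
  have hTlin_apply : ∀ q, Tlin q = (q.1, B q) := fun q => rfl
  have hTinv_apply : ∀ q : (EuclideanSpace ℝ (Fin n)) × ℝ,
      Tinv q = (q.1, (B (0,1))⁻¹ * (q.2 - B (q.1, 0))) := by
    intro q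
    simp [hTinvdef, ContinuousLinearMap.prod_apply, ContinuousLinearMap.smul_apply,
      ContinuousLinearMap.sub_apply, ContinuousLinearMap.comp_apply, smul_eq_mul]
  have h₁ : Function.LeftInverse Tinv Tlin := by
    intro q
    rw [hTlin_apply, hTinv_apply]
    ext
    · rfl
    · show (B (0,1))⁻¹ * (B q - B (q.1, 0)) = q.2
      rw [hBlin q]
      field_simp
      ring
  have h₂ : Function.RightInverse Tinv Tlin := by
    intro q
    rw [hTinv_apply, hTlin_apply]
    ext
    · rfl
    · show B (q.1, (B (0,1))⁻¹ * (q.2 - B (q.1, 0))) = q.2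
      rw [hBlin (q.1, (B (0,1))⁻¹ * (q.2 - B (q.1, 0)))]
      field_simp
      ring
  set T : ((EuclideanSpace ℝ (Fin n)) × ℝ) ≃L[ℝ] ((EuclideanSpace ℝ (Fin n)) × ℝ) :=
    ContinuousLinearEquiv.equivOfInverse Tlin Tinv h₁ h₂ with hTdef
  set Φ : (EuclideanSpace ℝ (Fin n)) × ℝ → (EuclideanSpace ℝ (Fin n)) × ℝ :=
    fun q => (q.1, F q) with hΦdef
  have hΦcd : ContDiffAt ℝ 1 Φ a := by
    have h0 : ContDiff ℝ 1 Φ := by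
      apply contDiff_fst.prodMk
      exact hg.comp (contDiff_fst.prodMk ((contDiff_snd.smul contDiff_const).add contDiff_const))
    exact h0.contDiffAt
  have hΦT : HasFDerivAt Φ (T : ((EuclideanSpace ℝ (Fin n)) × ℝ) →L[ℝ]
      ((EuclideanSpace ℝ (Fin n)) × ℝ)) a := by
    have h0 : HasFDerivAt Φ Tlin a := hasFDerivAt_fst.prodMk hB
    exact h0
  set ψ : (EuclideanSpace ℝ (Fin n)) × ℝ → (EuclideanSpace ℝ (Fin n)) × ℝ :=
    hΦcd.localInverse hΦT one_ne_zero with hψdef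
  have hψcd : ContDiffAt ℝ 1 ψ (Φ a) := hΦcd.to_localInverse hΦT one_ne_zero
  have hΦa : Φ a = ((x, (0:ℝ)) : (EuclideanSpace ℝ (Fin n)) × ℝ) := by
    have : F a = 0 := hφρ
    rw [hΦdef]
    simp only []
    rw [this]
  have hψa : ψ ((x, (0:ℝ))) = a := by
    rw [← hΦa]
    exact hΦcd.localInverse_apply_image hΦT one_ne_zero
  have hstrict := hΦcd.hasStrictFDerivAt' hΦT one_ne_zero
  have hright : ∀ᶠ y in nhds ((x, (0:ℝ)) : (EuclideanSpace ℝ (Fin n)) × ℝ), Φ (ψ y) = y := by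
    have h0 : ∀ᶠ y in nhds (Φ a), Φ (ψ y) = y := hstrict.eventually_right_inverse
    rwa [hΦa] at h0
  set r : EuclideanSpace ℝ (Fin n) → ℝ := fun x' => (ψ (x', 0)).2 with hrdef
  have hrcd : ContDiffAt ℝ 1 r x := by
    have hj : ContDiffAt ℝ 1 (fun x' : EuclideanSpace ℝ (Fin n) =>
        ((x', (0:ℝ)) : (EuclideanSpace ℝ (Fin n)) × ℝ)) x :=
      (contDiff_id.prodMk contDiff_const).contDiffAt
    have h2 : ContDiffAt ℝ 1 ψ ((x, (0:ℝ))) := by rwa [hΦa] at hψcd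
    exact (contDiff_snd.contDiffAt.comp x (h2.comp x hj) :)
  have hrx : r x = ρ := by
    rw [hrdef]
    simp only []
    rw [hψa]
  have hroot' : ∀ᶠ x' in nhds x, g x' (r x' • w + zc) = 0 := by
    have hjc : Filter.Tendsto (fun x' : EuclideanSpace ℝ (Fin n) =>
        ((x', (0:ℝ)) : (EuclideanSpace ℝ (Fin n)) × ℝ)) (nhds x) (nhds ((x, (0:ℝ)))) :=
      (continuous_id.prodMk continuous_const).continuousAt
    have hev := hjc.eventually hright
    filter_upwards [hev] with x' hx'
    have h1 : (ψ (x', 0)).1 = x' := congrArg Prod.fst hx'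
    have h2 : F (ψ (x', 0)) = 0 := congrArg Prod.snd hx'
    rw [hFdef] at h2
    simp only [] at h2
    rw [h1] at h2
    exact h2
  have hrpos : ∀ᶠ x' in nhds x, 0 < r x' := by
    have hc := hrcd.continuousAt
    have h0 : ∀ᶠ s in nhds (r x), 0 < s := by
      rw [hrx]; exact eventually_gt_nhds hρpos
    exact hc.eventually h0
  obtain ⟨u, hu_nhds, hu⟩ := hrcd.contDiffOn le_rfl (by simp)
  -- the neighborhood W
  set P : Set (EuclideanSpace ℝ (Fin n)) :=
    {x' | g x' (r x' • w + zc) = 0 ∧ 0 < r x'} with hPdef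
  have hPnhds : P ∈ nhds x := (hroot'.and hrpos)
  set W : Set (EuclideanSpace ℝ (Fin n)) := U ∩ interior u ∩ interior P with hWdef
  have hWopen : IsOpen W := (hU.inter isOpen_interior).inter isOpen_interior
  have hxW : x ∈ W :=
    ⟨⟨hxU', mem_interior_iff_mem_nhds.2 hu_nhds⟩, mem_interior_iff_mem_nhds.2 hPnhds⟩
  have hWrho : ∀ x' ∈ W, rho g z L c x' v = ENNReal.ofReal (r x') := by
    intro x' hx'
    have hP := interior_subset hx'.2
    exact rho_eq_ofReal g z L c x' v hconv
      (by have := hS0 x' hx'.1.1; rw [← hzcdef]; linarith) hP.2 hP.1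
  have hWtoReal : ∀ x' ∈ W, (rho g z L c x' v).toReal = r x' := by
    intro x' hx'
    rw [hWrho x' hx', ENNReal.toReal_ofReal (le_of_lt (interior_subset hx'.2).2)]
  refine ⟨W, hWopen, hxW, ?_, ?_, ?_⟩
  · exact (hu.mono (fun x' hx' => interior_subset hx'.1.2)).congr
      (fun x' hx' => hWtoReal x' hx')
  · rw [hρtoReal, add_comm zc (ρ • w), ← hy0def, hDinner]
    exact hDpos
  · have hWnhds : W ∈ nhds x := hWopen.mem_nhds hxW
    have heqev : (fun x' => (rho g z L c x' v).toReal) =ᶠ[nhds x] r := by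
      filter_upwards [hWnhds] with x' hx' using hWtoReal x' hx'
    rw [heqev.gradient_eq, hρtoReal, add_comm zc (ρ • w), ← hy0def, hDinner]
    -- now: gradient r x = (-D⁻¹) • gradient (fun x' => g x' y0) x
    have hrdiff : DifferentiableAt ℝ r x := hrcd.differentiableAt one_ne_zero
    set dr : EuclideanSpace ℝ (Fin n) →L[ℝ] ℝ := fderiv ℝ r x with hdrdef
    have hinnermap : HasFDerivAt (fun x' : EuclideanSpace ℝ (Fin n) => ((x', r x' • w + zc) :
        (EuclideanSpace ℝ (Fin n)) × EuclideanSpace ℝ (Fin m)))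
        ((ContinuousLinearMap.id ℝ (EuclideanSpace ℝ (Fin n))).prod (dr.smulRight w)) x :=
      (hasFDerivAt_id x).prodMk ((hrdiff.hasFDerivAt.smul_const w).add_const zc)
    have hxpt : ((x, r x • w + zc) : (EuclideanSpace ℝ (Fin n)) × EuclideanSpace ℝ (Fin m))
        = (x, y0) := by rw [hrx]
    have hG' : HasFDerivAt (Function.uncurry g) G ((x, r x • w + zc)) := by
      rw [hxpt]; exact hG
    have hK : HasFDerivAt (fun x' => g x' (r x' • w + zc))
        (G.comp ((ContinuousLinearMap.id ℝ (EuclideanSpace ℝ (Fin n))).prod (dr.smulRight w))) x :=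
      by have := hG'.comp x hinnermap; exact this
    have hK0 : fderiv ℝ (fun x' => g x' (r x' • w + zc)) x = 0 := by
      have hee : (fun x' => g x' (r x' • w + zc)) =ᶠ[nhds x] (fun _ => (0:ℝ)) := hroot'
      rw [hee.fderiv_eq]
      exact fderiv_const_apply 0
    have hKeq : G.comp ((ContinuousLinearMap.id ℝ (EuclideanSpace ℝ (Fin n))).prod
        (dr.smulRight w)) = 0 := by
      rw [← hK.fderiv]; exact hK0
    have heq : ∀ u0 : EuclideanSpace ℝ (Fin n), G (u0, 0) + dr u0 * D = 0 := by
      intro u0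
      have h1 := congrFun (congrArg DFunLike.coe hKeq) u0
      simp only [ContinuousLinearMap.comp_apply, ContinuousLinearMap.prod_apply,
        ContinuousLinearMap.id_apply, ContinuousLinearMap.smulRight_apply,
        ContinuousLinearMap.zero_apply] at h1
      have h2 : ((u0, dr u0 • w) : (EuclideanSpace ℝ (Fin n)) × EuclideanSpace ℝ (Fin m))
          = (u0, 0) + (dr u0) • ((0 : EuclideanSpace ℝ (Fin n)), w) := by
        ext <;> simp
      rw [h2, _root_.map_add, _root_.map_smul] at h1
      simp only [smul_eq_mul] at h1
      rw [hDdef]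
      linarith
    have hpart_x : fderiv ℝ (fun x' => g x' y0) x
        = G.comp (ContinuousLinearMap.inl ℝ (EuclideanSpace ℝ (Fin n)) (EuclideanSpace ℝ (Fin m))) :=
      by have := (hG.comp x (hasFDerivAt_prodMk_left (𝕜 := ℝ) x y0)).fderiv; exact this
    have hgrad2 : ∀ u0, ⟪gradient (fun x' => g x' y0) x, u0⟫_ℝ = G (u0, 0) := by
      intro u0
      rw [inner_gradient_apply, hpart_x]
      simp
    have hfinal : HasGradientAt r ((-D⁻¹) • gradient (fun x' => g x' y0) x) x := by
      rw [hasGradientAt_iff_hasFDerivAt]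
      have hfd := hrdiff.hasFDerivAt
      have hext : (InnerProductSpace.toDual ℝ (EuclideanSpace ℝ (Fin n)))
          ((-D⁻¹) • gradient (fun x' => g x' y0) x) = dr := by
        ext u0
        rw [InnerProductSpace.toDual_apply_apply, real_inner_smul_left, hgrad2]
        have := heq u0
        field_simp
        linarith
      rw [hext]
      exact hfd
    exact hfinal.gradient

end
end
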